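/- The Ricci contraction and multiplication by g on double forms satisfy the commutation relation: for a (p,q)-double form ω on an n-dimensional space, c(g·ω) = g·(cω) + (n−p−q)ω, where c is the Ricci contraction and g· is exterior multiplication by the metric. -/

import Mathlib

open scoped BigOperators RealInnerProductSpace

/-- A `(p,q)`-double form on `V` (function version). -/
abbrev DForm (V : Type*) (p q : ℕ) : Type _ := (Fin p → V) → (Fin q → V) → ℝ

/-- Wedge product of (alternating) `p`-forms, determinant convention. -/
noncomputable def wedgeF {V : Type*} {p q : ℕ} (α : (Fin p → V) → ℝ) (β : (Fin q → V) → ℝ) :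
    (Fin (p + q) → V) → ℝ := fun x =>
  (1 / (p.factorial * q.factorial : ℝ)) *
    ∑ σ : Equiv.Perm (Fin (p + q)),
      ((Equiv.Perm.sign σ : ℤ) : ℝ) *
        (α fun i => x (σ (Fin.castAdd q i))) * (β fun j => x (σ (Fin.natAdd p j)))

/-- Exterior (Kulkarni–Nomizu type) product of double forms. -/
noncomputable def dmul {V : Type*} {p q r s : ℕ} (ω : DForm V p q) (η : DForm V r s) :
    DForm V (p + r) (q + s) := fun x y =>
  (1 / (p.factorial * r.factorial * q.factorial * s.factorial : ℝ)) *
    ∑ σ : Equiv.Perm (Fin (p + r)), ∑ τ : Equiv.Perm (Fin (q + s)),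
      ((Equiv.Perm.sign σ : ℤ) : ℝ) * ((Equiv.Perm.sign τ : ℤ) : ℝ) *
        ω (fun i => x (σ (Fin.castAdd r i))) (fun j => y (τ (Fin.castAdd s j))) *
        η (fun i => x (σ (Fin.natAdd p i))) (fun j => y (τ (Fin.natAdd q j)))

/-- Reindexing a double form along equalities of the bidegree. -/
def castD {V : Type*} {p q p' q' : ℕ} (hp : p = p') (hq : q = q') (ω : DForm V p q) :
    DForm V p' q' := fun x y => ω (fun i => x (Fin.cast hp i)) (fun j => y (Fin.cast hq j))

/-- Tensor product of two forms, as a double form. -/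
def tmulD {V : Type*} {p q : ℕ} (α : (Fin p → V) → ℝ) (β : (Fin q → V) → ℝ) : DForm V p q :=
  fun x y => α x * β y

/-- Powers of a double form for the exterior product. -/
noncomputable def dpow {V : Type*} {a b : ℕ} (ω : DForm V a b) : (k : ℕ) → DForm V (a * k) (b * k)
  | 0 => fun _ _ => 1
  | k + 1 => dmul (dpow ω k) ω

/-- The metric, as a `(1,1)`-double form. -/
noncomputable def gmetric {V : Type*} [NormedAddCommGroup V] [InnerProductSpace ℝ V] :
    DForm V 1 1 := fun x y => (inner ℝ (x 0) (y 0) : ℝ)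

/-- A symmetric bilinear form as a `(1,1)`-double form. -/
def bilinD {V : Type*} [AddCommGroup V] [Module ℝ V] (B : V →ₗ[ℝ] V →ₗ[ℝ] ℝ) : DForm V 1 1 :=
  fun x y => B (x 0) (y 0)

/-- The scalar given by a `(0,0)`-double form. -/
def toScalar {V : Type*} (ω : DForm V 0 0) : ℝ := ω Fin.elim0 Fin.elim0

/-- Ricci contraction of a double form with respect to an orthonormal basis. -/
noncomputable def cD {V : Type*} [NormedAddCommGroup V] [InnerProductSpace ℝ V] {n : ℕ}
    (b : OrthonormalBasis (Fin n) ℝ V) {p q : ℕ} (ω : DForm V (p + 1) (q + 1)) : DForm V p q :=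
  fun x y => ∑ i : Fin n, ω (Fin.cons (b i) x) (Fin.cons (b i) y)

/-- Iterated Ricci contraction. -/
noncomputable def cIter {V : Type*} [NormedAddCommGroup V] [InnerProductSpace ℝ V] {n : ℕ}
    (b : OrthonormalBasis (Fin n) ℝ V) :
    ∀ (m : ℕ) {p q : ℕ}, DForm V (p + m) (q + m) → DForm V p q
  | 0, _, _, ω => ω
  | m + 1, _, _, ω => cIter b m (cD b ω)

/-- Symmetry of a `(p,p)`-double form. -/
def IsSymmD {V : Type*} {p : ℕ} (ω : DForm V p p) : Prop := ∀ x y, ω x y = ω y x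

/-- A double form is alternating in each group of arguments. -/
def IsAltD {V : Type*} {p q : ℕ} (ω : DForm V p q) : Prop :=
  (∀ (σ : Equiv.Perm (Fin p)) (x : Fin p → V) (y : Fin q → V),
      ω (x ∘ σ) y = ((Equiv.Perm.sign σ : ℤ) : ℝ) * ω x y) ∧
  (∀ (τ : Equiv.Perm (Fin q)) (x : Fin p → V) (y : Fin q → V),
      ω x (y ∘ τ) = ((Equiv.Perm.sign τ : ℤ) : ℝ) * ω x y)

/-- A double form is multilinear in each argument. -/
def IsMultilinearD {V : Type*} [AddCommGroup V] [Module ℝ V] {p q : ℕ}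
    (ω : DForm V p q) : Prop :=
  (∀ (x : Fin p → V) (i : Fin p) (u v : V) (c : ℝ) (y : Fin q → V),
      ω (Function.update x i (u + c • v)) y
        = ω (Function.update x i u) y + c * ω (Function.update x i v) y) ∧
  (∀ (x : Fin p → V) (y : Fin q → V) (j : Fin q) (u v : V) (c : ℝ),
      ω x (Function.update y j (u + c • v))
        = ω x (Function.update y j u) + c * ω x (Function.update y j v))

/-- The first Bianchi identity for a `(p,q)`-double form. -/
def FirstBianchiD {V : Type*} {p q : ℕ} (ω : DForm V p q) : Prop :=
  ∀ (x : Fin (p + 1) → V) (y : Fin q → V),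
    ∑ i : Fin (p + 1), ((-1 : ℝ) ^ (i : ℕ)) * ω (i.removeNth x) y = 0

/-- The volume form associated to an (oriented) orthonormal basis, extended by `0`
to tuples of the wrong length. -/
noncomputable def volA {V : Type*} [NormedAddCommGroup V] [InnerProductSpace ℝ V] {n : ℕ}
    (b : OrthonormalBasis (Fin n) ℝ V) {m : ℕ} (v : Fin m → V) : ℝ :=
  if h : m = n then
    Matrix.det (Matrix.of fun i j : Fin n => (inner ℝ (b i) (v (Fin.cast h.symm j)) : ℝ)) else 0

/-- Generalized Hodge star operator on double forms. -/
noncomputable def starD {V : Type*} [NormedAddCommGroup V] [InnerProductSpace ℝ V] {n : ℕ}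
    (b : OrthonormalBasis (Fin n) ℝ V) {p q : ℕ} (ω : DForm V p q) :
    DForm V (n - p) (n - q) := fun x y =>
  (1 / (p.factorial * q.factorial : ℝ)) *
    ∑ i : Fin p → Fin n, ∑ j : Fin q → Fin n,
      ω (fun a => b (i a)) (fun a => b (j a)) *
        volA b (Fin.append (fun a => b (i a)) x) * volA b (Fin.append (fun a => b (j a)) y)

/-- The scalar `⋆ω` of an `(n,n)`-double form. -/
noncomputable def starScalar {V : Type*} [NormedAddCommGroup V] [InnerProductSpace ℝ V] {n : ℕ}
    (b : OrthonormalBasis (Fin n) ℝ V) (ω : DForm V n n) : ℝ :=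
  toScalar (castD (Nat.sub_self n) (Nat.sub_self n) (starD b ω))


open Equiv Equiv.Perm


section Aux
variable {V : Type*}

lemma key_perm {m : ℕ} (k : Fin (m + 1)) :
    ∃ ρ : Equiv.Perm (Fin m),
      (∀ i : Fin m, Equiv.swap 0 k i.succ = k.succAbove (ρ i)) ∧
        (((Equiv.Perm.sign ρ : ℤ) : ℝ) = (if k = 0 then (1 : ℝ) else -1) * (-1) ^ (k : ℕ)) := by
  induction k using Fin.cases with
  | zero => exact ⟨1, fun i => by simp, by simp⟩
  | succ j =>
    refine ⟨j.cycleRange, fun i => (Fin.succAbove_cycleRange j i).symm, ?_⟩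
    simp [Fin.succ_ne_zero, Fin.sign_cycleRange, pow_succ]

lemma sign_sq {m : ℕ} (σ : Equiv.Perm (Fin m)) :
    ((Equiv.Perm.sign σ : ℤ) : ℝ) * ((Equiv.Perm.sign σ : ℤ) : ℝ) = 1 := by
  rw [← Int.cast_mul, ← Units.val_mul]
  rcases Int.units_eq_one_or (sign σ) with h | h <;> simp [h]

/-- apply an alternating 1-slot function to the "swap-shifted" tuple. -/
lemma alt_swap {m : ℕ} (f : (Fin m → V) → ℝ)
    (h1 : ∀ (σ : Equiv.Perm (Fin m)) (x : Fin m → V),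
      f (x ∘ σ) = ((Equiv.Perm.sign σ : ℤ) : ℝ) * f x)
    (k : Fin (m + 1)) (x : Fin (m + 1) → V) :
    f (fun i => x (Equiv.swap 0 k i.succ))
      = ((if k = 0 then (1 : ℝ) else -1) * (-1) ^ (k : ℕ)) * f (k.removeNth x) := by
  obtain ⟨ρ, hρ, hsign⟩ := key_perm k
  have : (fun i => x (Equiv.swap 0 k i.succ)) = (k.removeNth x) ∘ ρ := by
    funext i
    simp [Fin.removeNth, hρ i]
  rw [this, h1, hsign]

end Aux
set_option maxHeartbeats 1000000 in
lemma dmul_g_eq {V : Type*} [NormedAddCommGroup V] [InnerProductSpace ℝ V] {p q : ℕ}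
    (ω : DForm V p q) (halt : IsAltD ω)
    (x : Fin (p + 1) → V) (y : Fin (q + 1) → V) :
    castD (add_comm 1 p) (add_comm 1 q) (dmul (gmetric (V := V)) ω) x y
      = ∑ k : Fin (p + 1), ∑ l : Fin (q + 1),
          ((-1 : ℝ) ^ (k : ℕ) * (-1) ^ (l : ℕ)) * (inner ℝ (x k) (y l) : ℝ)
            * ω (k.removeNth x) (l.removeNth y) := by
  have ha : Fin.cast (add_comm 1 p).symm (0 : Fin (p + 1)) = Fin.castAdd p 0 := by
    ext; simp
  have hb : ∀ i : Fin p, Fin.cast (add_comm 1 p).symm i.succ = Fin.natAdd 1 i := by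
    intro i; ext; simp [Nat.add_comm]
  have ha' : Fin.cast (add_comm 1 q).symm (0 : Fin (q + 1)) = Fin.castAdd q 0 := by
    ext; simp
  have hb' : ∀ j : Fin q, Fin.cast (add_comm 1 q).symm j.succ = Fin.natAdd 1 j := by
    intro j; ext; simp [Nat.add_comm]
  have step1 :
      castD (add_comm 1 p) (add_comm 1 q) (dmul (gmetric (V := V)) ω) x y
        = (1 / (p.factorial * q.factorial : ℝ)) *
            ∑ σ : Equiv.Perm (Fin (p + 1)), ∑ τ : Equiv.Perm (Fin (q + 1)),
              ((Equiv.Perm.sign σ : ℤ) : ℝ) * ((Equiv.Perm.sign τ : ℤ) : ℝ) *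
                (inner ℝ (x (σ 0)) (y (τ 0)) : ℝ) *
                ω (fun i => x (σ i.succ)) (fun j => y (τ j.succ)) := by
    simp only [castD, dmul, gmetric, Nat.factorial_one, Nat.cast_one, one_mul, mul_one]
    congr 1
    refine Fintype.sum_equiv (Equiv.permCongr (finCongr (add_comm 1 p))) _ _ (fun σ => ?_)
    refine Fintype.sum_equiv (Equiv.permCongr (finCongr (add_comm 1 q))) _ _ (fun τ => ?_)
    simp only [Equiv.Perm.sign_permCongr, Equiv.permCongr_apply, finCongr_apply,
      finCongr_symm, ha, hb, ha', hb']
  rw [step1]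
  have hσ : ∀ (F : Equiv.Perm (Fin (p + 1)) → ℝ),
      ∑ σ, F σ = ∑ k : Fin (p + 1), ∑ σ' : Equiv.Perm (Fin p),
        F (Equiv.Perm.decomposeFin.symm (k, σ')) := by
    intro F
    exact (Fintype.sum_equiv Equiv.Perm.decomposeFin F
      (fun kp => F (Equiv.Perm.decomposeFin.symm kp)) (fun σ => by simp)).trans
      (Fintype.sum_prod_type _)
  have hτ : ∀ (F : Equiv.Perm (Fin (q + 1)) → ℝ),
      ∑ τ, F τ = ∑ l : Fin (q + 1), ∑ τ' : Equiv.Perm (Fin q),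
        F (Equiv.Perm.decomposeFin.symm (l, τ')) := by
    intro F
    exact (Fintype.sum_equiv Equiv.Perm.decomposeFin F
      (fun lp => F (Equiv.Perm.decomposeFin.symm lp)) (fun τ => by simp)).trans
      (Fintype.sum_prod_type _)
  rw [hσ]
  simp only [hτ]
  have key : ∀ (k : Fin (p + 1)) (σ' : Equiv.Perm (Fin p)) (l : Fin (q + 1))
      (τ' : Equiv.Perm (Fin q)),
      ((Equiv.Perm.sign (Equiv.Perm.decomposeFin.symm (k, σ')) : ℤ) : ℝ) *
        ((Equiv.Perm.sign (Equiv.Perm.decomposeFin.symm (l, τ')) : ℤ) : ℝ) *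
        (inner ℝ (x (Equiv.Perm.decomposeFin.symm (k, σ') 0))
          (y (Equiv.Perm.decomposeFin.symm (l, τ') 0)) : ℝ) *
        ω (fun i => x (Equiv.Perm.decomposeFin.symm (k, σ') i.succ))
          (fun j => y (Equiv.Perm.decomposeFin.symm (l, τ') j.succ))
      = ((-1 : ℝ) ^ (k : ℕ) * (-1) ^ (l : ℕ)) * (inner ℝ (x k) (y l) : ℝ)
          * ω (k.removeNth x) (l.removeNth y) := by
    intro k σ' l τ'
    have hsign1 : ((Equiv.Perm.sign (Equiv.Perm.decomposeFin.symm (k, σ')) : ℤ) : ℝ)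
        = (if k = 0 then (1 : ℝ) else -1) * ((Equiv.Perm.sign σ' : ℤ) : ℝ) := by
      rw [Equiv.Perm.decomposeFin.symm_sign]
      split_ifs <;> simp
    have hsign2 : ((Equiv.Perm.sign (Equiv.Perm.decomposeFin.symm (l, τ')) : ℤ) : ℝ)
        = (if l = 0 then (1 : ℝ) else -1) * ((Equiv.Perm.sign τ' : ℤ) : ℝ) := by
      rw [Equiv.Perm.decomposeFin.symm_sign]
      split_ifs <;> simp
    have e1 : (fun i => x (Equiv.Perm.decomposeFin.symm (k, σ') i.succ))
        = (fun i => x (Equiv.swap 0 k i.succ)) ∘ σ' := by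
      funext i
      simp [Equiv.Perm.decomposeFin_symm_apply_succ]
    have e2 : (fun j => y (Equiv.Perm.decomposeFin.symm (l, τ') j.succ))
        = (fun j => y (Equiv.swap 0 l j.succ)) ∘ τ' := by
      funext j
      simp [Equiv.Perm.decomposeFin_symm_apply_succ]
    have A2 : ω (fun i => x (Equiv.swap 0 k i.succ)) (fun j => y (Equiv.swap 0 l j.succ))
        = ((if k = 0 then (1 : ℝ) else -1) * (-1) ^ (k : ℕ)) *
            ω (k.removeNth x) (fun j => y (Equiv.swap 0 l j.succ)) :=
      alt_swap (fun z => ω z _) (fun σ xx => halt.1 σ xx _) k x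
    have A3 : ω (k.removeNth x) (fun j => y (Equiv.swap 0 l j.succ))
        = ((if l = 0 then (1 : ℝ) else -1) * (-1) ^ (l : ℕ)) *
            ω (k.removeNth x) (l.removeNth y) :=
      alt_swap (fun z => ω (k.removeNth x) z) (fun τ yy => halt.2 τ _ yy) l y
    have hω : ω (fun i => x (Equiv.Perm.decomposeFin.symm (k, σ') i.succ))
          (fun j => y (Equiv.Perm.decomposeFin.symm (l, τ') j.succ))
        = ((Equiv.Perm.sign σ' : ℤ) : ℝ) * ((Equiv.Perm.sign τ' : ℤ) : ℝ) *
            ((if k = 0 then (1 : ℝ) else -1) * (-1) ^ (k : ℕ)) *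
            ((if l = 0 then (1 : ℝ) else -1) * (-1) ^ (l : ℕ)) *
            ω (k.removeNth x) (l.removeNth y) := by
      rw [e1, e2, halt.1, halt.2, A2, A3]
      ring
    rw [hsign1, hsign2, hω, Equiv.Perm.decomposeFin_symm_apply_zero,
      Equiv.Perm.decomposeFin_symm_apply_zero]
    have s1 := sign_sq σ'
    have s2 := sign_sq τ'
    have s3 : (if k = 0 then (1 : ℝ) else -1) * (if k = 0 then (1 : ℝ) else -1) = 1 := by
      split_ifs <;> norm_num
    have s4 : (if l = 0 then (1 : ℝ) else -1) * (if l = 0 then (1 : ℝ) else -1) = 1 := by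
      split_ifs <;> norm_num
    set a : ℝ := ((Equiv.Perm.sign σ' : ℤ) : ℝ)
    set bb : ℝ := ((Equiv.Perm.sign τ' : ℤ) : ℝ)
    set c : ℝ := (if k = 0 then (1 : ℝ) else -1)
    set d : ℝ := (if l = 0 then (1 : ℝ) else -1)
    calc (c * a) * (d * bb) * (inner ℝ (x k) (y l) : ℝ) *
          (a * bb * (c * (-1) ^ (k : ℕ)) * (d * (-1) ^ (l : ℕ)) *
            ω (k.removeNth x) (l.removeNth y))
        = (a * a) * ((bb * bb) * ((c * c) * ((d * d) *
            (((-1 : ℝ) ^ (k : ℕ) * (-1) ^ (l : ℕ)) * (inner ℝ (x k) (y l) : ℝ) *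
              ω (k.removeNth x) (l.removeNth y))))) := by ring
      _ = _ := by rw [s1, s2, s3, s4]; ring
  simp only [key]
  simp only [Finset.sum_const, Finset.card_univ, Fintype.card_perm, Fintype.card_fin,
    nsmul_eq_mul]
  simp only [Finset.mul_sum]
  refine Finset.sum_congr rfl fun k _ => ?_
  refine Finset.sum_congr rfl fun l _ => ?_
  have hp : (p.factorial : ℝ) ≠ 0 := Nat.cast_ne_zero.mpr p.factorial_ne_zero
  have hq : (q.factorial : ℝ) ≠ 0 := Nat.cast_ne_zero.mpr q.factorial_ne_zero
  field_simp

lemma cons_comp_perm {V : Type*} {m : ℕ} (v : V) (x : Fin m → V) (σ : Equiv.Perm (Fin m)) :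
    Fin.cons v (x ∘ σ) = (Fin.cons v x) ∘ (Equiv.Perm.decomposeFin.symm (0, σ)) := by
  funext j
  induction j using Fin.cases with
  | zero => simp [Equiv.Perm.decomposeFin_symm_apply_zero]
  | succ i => simp [Equiv.Perm.decomposeFin_symm_apply_succ]

lemma cD_alt {V : Type*} [NormedAddCommGroup V] [InnerProductSpace ℝ V] {n p q : ℕ}
    (b : OrthonormalBasis (Fin n) ℝ V) (ω : DForm V (p + 1) (q + 1)) (halt : IsAltD ω) :
    IsAltD (cD b ω) := by
  constructor
  · intro σ x y
    simp only [cD]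
    rw [Finset.mul_sum]
    refine Finset.sum_congr rfl fun i _ => ?_
    rw [cons_comp_perm, halt.1]
    congr 1
    rw [Equiv.Perm.decomposeFin.symm_sign]
    simp
  · intro τ x y
    simp only [cD]
    rw [Finset.mul_sum]
    refine Finset.sum_congr rfl fun i _ => ?_
    rw [cons_comp_perm, halt.2]
    congr 1
    rw [Equiv.Perm.decomposeFin.symm_sign]
    simp

lemma removeNth_succ_cons {α : Type*} {m : ℕ} (i : Fin (m + 1)) (a : α) (y : Fin (m + 1) → α) :
    (Fin.removeNth (α := fun _ => α) (Fin.succ i) (Fin.cons a y)) = Fin.cons a (i.removeNth y) := by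
  funext j
  induction j using Fin.cases with
  | zero =>
    show (Fin.cons (α := fun _ => α) a y) (i.succ.succAbove 0)
        = Fin.cons (α := fun _ => α) a (i.removeNth y) 0
    rw [Fin.succ_succAbove_zero]
    simp
  | succ r =>
    show (Fin.cons (α := fun _ => α) a y) (i.succ.succAbove r.succ)
        = Fin.cons (α := fun _ => α) a (i.removeNth y) r.succ
    rw [Fin.succ_succAbove_succ]
    simp [Fin.removeNth]

lemma cons_self_removeNth {V : Type*} {m : ℕ} (f : (Fin (m + 1) → V) → ℝ)
    (h1 : ∀ (σ : Equiv.Perm (Fin (m + 1))) (x : Fin (m + 1) → V),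
      f (x ∘ σ) = ((Equiv.Perm.sign σ : ℤ) : ℝ) * f x)
    (l : Fin (m + 1)) (y : Fin (m + 1) → V) :
    f (Fin.cons (y l) (l.removeNth y)) = (-1 : ℝ) ^ (l : ℕ) * f y := by
  have e : Fin.cons (y l) (l.removeNth y) = y ∘ (l.cycleRange).symm := by
    funext j
    induction j using Fin.cases with
    | zero => simp
    | succ r => simp [Fin.removeNth]
  rw [e, h1]
  congr 1
  have : Equiv.Perm.sign (l.cycleRange).symm = Equiv.Perm.sign l.cycleRange :=
    Equiv.Perm.sign_symm _
  rw [this, Fin.sign_cycleRange]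
  simp

lemma sum_inner_cons {V : Type*} [NormedAddCommGroup V] [InnerProductSpace ℝ V] {n m : ℕ}
    (b : OrthonormalBasis (Fin n) ℝ V) (f : (Fin (m + 1) → V) → ℝ)
    (hf : ∀ (z : Fin (m + 1) → V) (j : Fin (m + 1)) (u w : V) (c : ℝ),
      f (Function.update z j (u + c • w))
        = f (Function.update z j u) + c * f (Function.update z j w))
    (v : V) (z : Fin m → V) :
    ∑ i : Fin n, (inner ℝ (b i) v : ℝ) * f (Fin.cons (b i) z) = f (Fin.cons v z) := by
  have hF : ∀ (u w : V) (c : ℝ),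
      f (Fin.cons (u + c • w) z) = f (Fin.cons u z) + c * f (Fin.cons w z) := by
    intro u w c
    have h := hf (Fin.cons u z) 0 u w c
    rwa [Fin.update_cons_zero, Fin.update_cons_zero, Fin.update_cons_zero] at h
  have hF0 : f (Fin.cons (0 : V) z) = 0 := by
    have h := hF 0 0 1
    simp only [add_zero, one_smul, smul_zero, one_mul] at h
    linarith
  have hadd : ∀ u w, f (Fin.cons (u + w) z) = f (Fin.cons u z) + f (Fin.cons w z) := by
    intro u w
    simpa using hF u w 1
  have hsmul : ∀ (c : ℝ) (w : V), f (Fin.cons (c • w) z) = c * f (Fin.cons w z) := by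
    intro c w
    simpa [hF0] using hF 0 w c
  let L : V →ₗ[ℝ] ℝ :=
    { toFun := fun u => f (Fin.cons u z)
      map_add' := hadd
      map_smul' := hsmul }
  have hv := congrArg L (b.sum_repr' v)
  rw [map_sum] at hv
  simpa [L, hsmul] using hv

lemma sum_split {M : Type*} [AddCommMonoid M] {p q : ℕ} (T : Fin (p + 1) → Fin (q + 1) → M) :
    ∑ k : Fin (p + 1), ∑ l : Fin (q + 1), T k l
      = T 0 0 + (∑ l : Fin q, T 0 l.succ) + ((∑ k : Fin p, T k.succ 0)
        + ∑ k : Fin p, ∑ l : Fin q, T k.succ l.succ) := by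
  rw [Fin.sum_univ_succ (f := fun k => ∑ l : Fin (q + 1), T k l),
    Fin.sum_univ_succ (f := fun l => T 0 l)]
  have h2 : ∑ k : Fin p, ∑ l : Fin (q + 1), T k.succ l
      = ∑ k : Fin p, (T k.succ 0 + ∑ l : Fin q, T k.succ l.succ) :=
    Finset.sum_congr rfl fun k _ => Fin.sum_univ_succ _
  rw [h2, Finset.sum_add_distrib]

set_option maxHeartbeats 1000000 in
/-- commutation of the Ricci contraction with multiplication by the
metric: `c(g·ω) = g·(cω) + (n−p−q)ω` for a `(p,q)`-double form `ω`
(stated here for `p = p'+1`, `q = q'+1`). -/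
theorem gaussBonnet_stmt11 {V : Type*} [NormedAddCommGroup V] [InnerProductSpace ℝ V]
    {n : ℕ} (b : OrthonormalBasis (Fin n) ℝ V) (hdim : Module.finrank ℝ V = n)
    {p q : ℕ} (ω : DForm V (p + 1) (q + 1)) (halt : IsAltD ω) (hml : IsMultilinearD ω) :
    cD b (castD (add_comm 1 (p + 1)) (add_comm 1 (q + 1)) (dmul (gmetric (V := V)) ω))
      = castD (add_comm 1 p) (add_comm 1 q) (dmul (gmetric (V := V)) (cD b ω))
        + (((n : ℝ) - (p + 1) - (q + 1)) • ω) := by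
  funext x y
  have hcω : IsAltD (cD b ω) := cD_alt b ω halt
  simp only [Pi.add_apply, Pi.smul_apply, smul_eq_mul]
  rw [dmul_g_eq (cD b ω) hcω x y]
  have L : cD b (castD (add_comm 1 (p + 1)) (add_comm 1 (q + 1)) (dmul (gmetric (V := V)) ω)) x y
      = ∑ i : Fin n, ∑ k : Fin (p + 1 + 1), ∑ l : Fin (q + 1 + 1),
          ((-1 : ℝ) ^ (k : ℕ) * (-1) ^ (l : ℕ)) *
            (inner ℝ (Fin.cons (α := fun _ => V) (b i) x k) (Fin.cons (α := fun _ => V) (b i) y l) : ℝ)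
            * ω (Fin.removeNth (α := fun _ => V) k (Fin.cons (b i) x)) (Fin.removeNth (α := fun _ => V) l (Fin.cons (b i) y)) := by
    refine Finset.sum_congr rfl fun i _ => ?_
    exact dmul_g_eq ω halt _ _
  rw [L]
  rw [Finset.sum_congr rfl (fun (i : Fin n) (_ : i ∈ Finset.univ) =>
    sum_split (fun (k : Fin (p + 1 + 1)) (l : Fin (q + 1 + 1)) =>
      ((-1 : ℝ) ^ (k : ℕ) * (-1) ^ (l : ℕ)) *
        (inner ℝ (Fin.cons (α := fun _ => V) (b i) x k) (Fin.cons (α := fun _ => V) (b i) y l) : ℝ)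
        * ω (Fin.removeNth (α := fun _ => V) k (Fin.cons (b i) x))
            (Fin.removeNth (α := fun _ => V) l (Fin.cons (b i) y))))]
  rw [Finset.sum_add_distrib, Finset.sum_add_distrib, Finset.sum_add_distrib]
  simp only [Fin.cons_zero, Fin.removeNth_zero, Fin.tail_cons, Fin.cons_succ,
    removeNth_succ_cons, Fin.val_zero, Fin.val_succ, pow_zero, pow_succ, one_mul, mul_one]
  have B1 : ∑ i : Fin n, (inner ℝ (b i) (b i) : ℝ) * ω x y = (n : ℝ) * ω x y := by
    have h1 : ∀ i, (inner ℝ (b i) (b i) : ℝ) = 1 := fun i => by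
      have hn := b.orthonormal.1 i
      rw [real_inner_self_eq_norm_mul_norm, hn]
      norm_num
    simp [h1, Finset.sum_const, Finset.card_univ]
  have hpow : ∀ m : ℕ, ((-1 : ℝ)) ^ m * (-1) ^ m = 1 := fun m => by
    rw [← pow_add]
    exact Even.neg_one_pow ⟨m, rfl⟩
  have B2 : ∑ i : Fin n, ∑ l : Fin (q + 1),
      (-1 : ℝ) ^ (l : ℕ) * -1 * (inner ℝ (b i) (y l) : ℝ) * ω x (Fin.cons (b i) (l.removeNth y))
      = -((q : ℝ) + 1) * ω x y := by
    rw [Finset.sum_comm]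
    have hl : ∀ l : Fin (q + 1), ∑ i : Fin n,
        (-1 : ℝ) ^ (l : ℕ) * -1 * (inner ℝ (b i) (y l) : ℝ) * ω x (Fin.cons (b i) (l.removeNth y))
        = -1 * ω x y := by
      intro l
      have hin : ∑ i : Fin n, (inner ℝ (b i) (y l) : ℝ) * ω x (Fin.cons (b i) (l.removeNth y))
          = ω x (Fin.cons (y l) (l.removeNth y)) :=
        sum_inner_cons b (fun z => ω x z) (fun z j u w c => hml.2 x z j u w c) (y l)
          (l.removeNth y)
      have hcs : ω x (Fin.cons (y l) (l.removeNth y)) = (-1 : ℝ) ^ (l : ℕ) * ω x y :=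
        cons_self_removeNth (fun z => ω x z) (fun σ z => halt.2 σ x z) l y
      calc ∑ i : Fin n, (-1 : ℝ) ^ (l : ℕ) * -1 * (inner ℝ (b i) (y l) : ℝ) *
            ω x (Fin.cons (b i) (l.removeNth y))
          = (-1 : ℝ) ^ (l : ℕ) * -1 * ∑ i : Fin n, (inner ℝ (b i) (y l) : ℝ) *
              ω x (Fin.cons (b i) (l.removeNth y)) := by
            rw [Finset.mul_sum]
            exact Finset.sum_congr rfl fun i _ => by ring
        _ = (-1 : ℝ) ^ (l : ℕ) * -1 * ((-1 : ℝ) ^ (l : ℕ) * ω x y) := by rw [hin, hcs]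
        _ = -1 * ω x y := by linear_combination (-(ω x y)) * hpow (l : ℕ)
    rw [Finset.sum_congr rfl fun l (_ : l ∈ Finset.univ) => hl l, Finset.sum_const]
    simp [Finset.card_univ]
    push_cast
    ring
  have B3 : ∑ i : Fin n, ∑ k : Fin (p + 1),
      (-1 : ℝ) ^ (k : ℕ) * -1 * (inner ℝ (x k) (b i) : ℝ) * ω (Fin.cons (b i) (k.removeNth x)) y
      = -((p : ℝ) + 1) * ω x y := by
    rw [Finset.sum_comm]
    have hk : ∀ k : Fin (p + 1), ∑ i : Fin n,
        (-1 : ℝ) ^ (k : ℕ) * -1 * (inner ℝ (x k) (b i) : ℝ) * ω (Fin.cons (b i) (k.removeNth x)) y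
        = -1 * ω x y := by
      intro k
      have hin : ∑ i : Fin n, (inner ℝ (b i) (x k) : ℝ) * ω (Fin.cons (b i) (k.removeNth x)) y
          = ω (Fin.cons (x k) (k.removeNth x)) y :=
        sum_inner_cons b (fun z => ω z y) (fun z j u w c => hml.1 z j u w c y) (x k)
          (k.removeNth x)
      have hcs : ω (Fin.cons (x k) (k.removeNth x)) y = (-1 : ℝ) ^ (k : ℕ) * ω x y :=
        cons_self_removeNth (fun z => ω z y) (fun σ z => halt.1 σ z y) k x
      calc ∑ i : Fin n, (-1 : ℝ) ^ (k : ℕ) * -1 * (inner ℝ (x k) (b i) : ℝ) *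
            ω (Fin.cons (b i) (k.removeNth x)) y
          = (-1 : ℝ) ^ (k : ℕ) * -1 * ∑ i : Fin n, (inner ℝ (b i) (x k) : ℝ) *
              ω (Fin.cons (b i) (k.removeNth x)) y := by
            rw [Finset.mul_sum]
            refine Finset.sum_congr rfl fun i _ => ?_
            rw [real_inner_comm]
            ring
        _ = (-1 : ℝ) ^ (k : ℕ) * -1 * ((-1 : ℝ) ^ (k : ℕ) * ω x y) := by rw [hin, hcs]
        _ = -1 * ω x y := by linear_combination (-(ω x y)) * hpow (k : ℕ)
    rw [Finset.sum_congr rfl fun k (_ : k ∈ Finset.univ) => hk k, Finset.sum_const]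
    simp [Finset.card_univ]
    push_cast
    ring
  have B4 : ∑ i : Fin n, ∑ k : Fin (p + 1), ∑ l : Fin (q + 1),
      (-1 : ℝ) ^ (k : ℕ) * -1 * ((-1 : ℝ) ^ (l : ℕ) * -1) * (inner ℝ (x k) (y l) : ℝ) *
        ω (Fin.cons (b i) (k.removeNth x)) (Fin.cons (b i) (l.removeNth y))
      = ∑ k : Fin (p + 1), ∑ l : Fin (q + 1),
          (-1 : ℝ) ^ (k : ℕ) * (-1) ^ (l : ℕ) * (inner ℝ (x k) (y l) : ℝ) *
            cD b ω (k.removeNth x) (l.removeNth y) := by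
    rw [Finset.sum_comm]
    refine Finset.sum_congr rfl fun k _ => ?_
    rw [Finset.sum_comm]
    refine Finset.sum_congr rfl fun l _ => ?_
    have hc : cD b ω (k.removeNth x) (l.removeNth y)
        = ∑ i : Fin n, ω (Fin.cons (b i) (k.removeNth x)) (Fin.cons (b i) (l.removeNth y)) :=
      rfl
    rw [hc, Finset.mul_sum]
    exact Finset.sum_congr rfl fun i _ => by ring
  rw [B1, B2, B3, B4]
  push_cast
  ring
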